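/- Let α ≠ 0 and β be real constants and let w : ℝ → ℝ be an arbitrary differentiable function. Then u(t,x,y) = α(w(t) − x/(αt + β)) satisfies the ZK equation u_{xt} − (u u_x)_x − u_{yy} = 0 at all points with αt + β ≠ 0. -/

import Mathlib

/-- The Zabolotskaya–Khokhlov equation `u_{xt} − (u u_x)_x − u_{yy} = 0`
at the point `(t,x,y)`. -/
noncomputable def ZK (u : ℝ → ℝ → ℝ → ℝ) (t x y : ℝ) : Prop :=
  deriv (fun x' => deriv (fun t' => u t' x' y) t) x
    - deriv (fun x' => u t x' y * deriv (fun x'' => u t x'' y) x') x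
    - deriv (fun y' => deriv (fun y'' => u t x y'') y') y = 0

theorem solution_L26 (α β : ℝ) (hα : α ≠ 0) (w : ℝ → ℝ) (hw : Differentiable ℝ w) :
    ∀ t x y : ℝ, α * t + β ≠ 0 →
      ZK (fun t x _ => α * (w t - x / (α * t + β))) t x y := by
  intro t x y hc
  unfold ZK
  set c : ℝ := α * t + β with hcdef
  -- derivative in t, for each x'
  have hlin : HasDerivAt (fun t' : ℝ => α * t' + β) α t := by
    simpa using ((hasDerivAt_id t).const_mul α).add_const β
  have hdt : ∀ x' : ℝ, deriv (fun t' => α * (w t' - x' / (α * t' + β))) t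
      = α * (deriv w t + x' * α / c ^ 2) := by
    intro x'
    have hinv : HasDerivAt (fun t' : ℝ => (α * t' + β)⁻¹) (-α / c ^ 2) t := by
      simpa [hcdef, div_eq_mul_inv, sq, Pi.inv_def] using hlin.inv hc
    have h1 : HasDerivAt (fun t' : ℝ => α * (w t' - x' / (α * t' + β)))
        (α * (deriv w t - x' * (-α / c ^ 2))) t := by
      have := ((hw t).hasDerivAt.sub ((hinv.const_mul x'))).const_mul α
      simpa [div_eq_mul_inv] using this
    rw [h1.deriv]; ring
  have hT1 : deriv (fun x' => deriv (fun t' => α * (w t' - x' / (α * t' + β))) t) x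
      = α * α / c ^ 2 := by
    have : (fun x' => deriv (fun t' => α * (w t' - x' / (α * t' + β))) t)
        = fun x' => α * (deriv w t + x' * α / c ^ 2) := funext hdt
    rw [this]
    have h : HasDerivAt (fun x' : ℝ => α * (deriv w t + x' * α / c ^ 2))
        (α * (α / c ^ 2)) x := by
      have : HasDerivAt (fun x' : ℝ => x' * α / c ^ 2) (α / c ^ 2) x := by
        simpa [mul_div_assoc] using (hasDerivAt_id x).mul_const (α / c ^ 2)
      simpa using (this.const_add (deriv w t)).const_mul α
    rw [h.deriv]; ring
  -- derivative in x
  have hdx : ∀ x' : ℝ, deriv (fun x'' => α * (w t - x'' / c)) x' = -(α / c) := by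
    intro x'
    have h : HasDerivAt (fun x'' : ℝ => α * (w t - x'' / c)) (α * (0 - 1 / c)) x' := by
      have : HasDerivAt (fun x'' : ℝ => x'' / c) (1 / c) x' := by
        simpa [div_eq_mul_inv] using (hasDerivAt_id x').mul_const c⁻¹
      simpa using ((hasDerivAt_const x' (w t)).sub this).const_mul α
    rw [h.deriv]; ring
  have hT2 : deriv (fun x' => α * (w t - x' / c) *
      deriv (fun x'' => α * (w t - x'' / c)) x') x = α * α / c ^ 2 := by
    have heq : (fun x' => α * (w t - x' / c) * deriv (fun x'' => α * (w t - x'' / c)) x')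
        = fun x' => α * (w t - x' / c) * (-(α / c)) := by
      funext x'; rw [hdx x']
    rw [heq]
    have h : HasDerivAt (fun x' : ℝ => α * (w t - x' / c) * (-(α / c)))
        (α * (0 - 1 / c) * (-(α / c))) x := by
      have : HasDerivAt (fun x'' : ℝ => x'' / c) (1 / c) x := by
        simpa [div_eq_mul_inv] using (hasDerivAt_id x).mul_const c⁻¹
      exact (((hasDerivAt_const x (w t)).sub this).const_mul α).mul_const _
    rw [h.deriv]
    field_simp; ring
  have hT3 : deriv (fun y' => deriv (fun _ : ℝ => α * (w t - x / c)) y') y = 0 := by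
    simp
  rw [hT1, hT2, hT3]; ring
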